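/- Let f be analytic on the open unit disk D = {z ∈ ℂ : |z| < 1} with |f(z)| < 1 for all z ∈ D, and write f(z) = ∑_{k=0}^∞ a_k z^k. Let t and p be real numbers with 0 < t < 1 and 0 < p ≤ 1. Define R_{t,p} = (1 − t + tp − 2√((1 − t)(tp + 1 − t)))/(tp − 3 + 3t) if t ≠ 3/(p + 3), and R_{t,p} = 1/2 if t = 3/(p + 3). Then for every z ∈ D with |z| = r ≤ R_{t,p}, one has t |f(z)|^p + (1 − t) ∑_{k=0}^∞ |a_k| r^k ≤ 1. -/

import Mathlib

open Metric Set
open scoped ENNReal NNReal Topology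
open Filter

lemma hasFPS_of_hasSum (c : ℕ → ℂ) (F : ℂ → ℂ)
    (h : ∀ z ∈ Metric.ball (0 : ℂ) 1, HasSum (fun n : ℕ => c n * z ^ n) (F z)) :
    HasFPowerSeriesOnBall F (FormalMultilinearSeries.ofScalars ℂ c) 0 1 := by
  set p := FormalMultilinearSeries.ofScalars ℂ c with hp
  have hpn : ∀ (n : ℕ) (z : ℂ), (p n fun _ => z) = c n * z ^ n := by
    intro n z
    rw [hp, FormalMultilinearSeries.ofScalars_apply_eq, smul_eq_mul]
  have hrad : 1 ≤ p.radius := by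
    rw [show (1 : ℝ≥0∞) = ((1 : NNReal) : ℝ≥0∞) by norm_num]
    apply ENNReal.le_of_forall_nnreal_lt
    intro s hs
    have hs1 : (s : ℝ) < 1 := by exact_mod_cast hs
    have hmem : ((s : ℝ) : ℂ) ∈ Metric.ball (0 : ℂ) 1 := by
      simp [abs_of_nonneg s.2, hs1]
    have hsum : Summable fun n : ℕ => ‖c n * ((s : ℝ) : ℂ) ^ n‖ :=
      summable_norm_iff.mpr (h _ hmem).summable
    apply p.le_radius_of_summable_norm
    apply hsum.congr
    intro n
    have hn : ‖p n‖ = ‖c n‖ := FormalMultilinearSeries.ofScalars_norm ℂ c n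
    rw [norm_mul, norm_pow, hn]
    norm_num [abs_of_nonneg s.2]
  have h0 : HasFPowerSeriesOnBall p.sum p 0 p.radius :=
    p.hasFPowerSeriesOnBall (lt_of_lt_of_le one_pos hrad)
  have h1 : HasFPowerSeriesOnBall p.sum p 0 1 := h0.mono one_pos hrad
  apply h1.congr
  intro z hz
  have hz' : z ∈ Metric.ball (0 : ℂ) 1 := by
    rwa [show (1 : ℝ≥0∞) = ((1 : NNReal) : ℝ≥0∞) by norm_num,
      Metric.emetric_ball_nnreal] at hz
  have h2 : HasSum (fun n => p n fun _ => z) (p.sum z) := by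
    apply p.hasSum
    rw [hp] at hrad ⊢
    exact lt_of_lt_of_le hz hrad
  have h3 : HasSum (fun n => p n fun _ => z) (F z) := by
    simp only [hpn]
    simpa using h z (by simpa using hz')
  exact h2.unique h3

lemma maxmod_aux (q : ℂ → ℂ) (k : ℕ)
    (hq : DifferentiableOn ℂ q (Metric.ball 0 1))
    (hbound : ∀ z ∈ Metric.ball (0 : ℂ) 1, ‖z‖ ^ k * ‖q z‖ ≤ 1) :
    ∀ z ∈ Metric.ball (0 : ℂ) 1, ‖q z‖ ≤ 1 := by
  intro z hz
  have hz1 : ‖z‖ < 1 := by simpa [Complex.dist_eq] using hz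
  have key : ∀ s ∈ Set.Ioo (‖z‖) 1, ‖q z‖ * s ^ k ≤ 1 := by
    rintro s ⟨hs1, hs2⟩
    have hs0 : 0 < s := lt_of_le_of_lt (norm_nonneg z) hs1
    have hdc : DiffContOnCl ℂ q (Metric.ball 0 s) := by
      apply DifferentiableOn.diffContOnCl
      apply hq.mono
      rw [closure_ball (0:ℂ) (ne_of_gt hs0)]
      intro w hw
      simp only [Metric.mem_closedBall, Metric.mem_ball] at hw ⊢
      exact lt_of_le_of_lt hw hs2
    have hfr : ∀ w ∈ frontier (Metric.ball (0:ℂ) s), ‖q w‖ ≤ 1 / s ^ k := by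
      intro w hw
      rw [frontier_ball (0:ℂ) (ne_of_gt hs0)] at hw
      have hws : ‖w‖ = s := by simpa [Complex.dist_eq] using hw
      have hwb : w ∈ Metric.ball (0:ℂ) 1 := by
        simp only [Metric.mem_ball, Complex.dist_eq, sub_zero, hws]; exact hs2
      have h2 := hbound w hwb
      rw [hws] at h2
      rw [le_div_iff₀ (by positivity)]
      calc ‖q w‖ * s ^ k = s ^ k * ‖q w‖ := by
            rw [mul_comm]
        _ ≤ 1 := h2
    have hcl : z ∈ closure (Metric.ball (0:ℂ) s) := by
      rw [closure_ball (0:ℂ) (ne_of_gt hs0)]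
      simp only [Metric.mem_closedBall, Complex.dist_eq, sub_zero]
      exact hs1.le
    have hmax := Complex.norm_le_of_forall_mem_frontier_norm_le
      Metric.isBounded_ball hdc hfr hcl
    rw [le_div_iff₀ (by positivity)] at hmax
    exact hmax
  have hne : (𝓝[Set.Ioo (‖z‖) 1] (1:ℝ)).NeBot :=
    right_nhdsWithin_Ioo_neBot hz1
  have htend : Filter.Tendsto (fun s : ℝ => ‖q z‖ * s ^ k)
      (𝓝[Set.Ioo (‖z‖) 1] (1:ℝ)) (𝓝 (‖q z‖ * 1 ^ k)) :=
    Filter.Tendsto.mono_left ((continuous_const.mul (continuous_pow k)).tendsto 1)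
      nhdsWithin_le_nhds
  have hle := le_of_tendsto htend
    (by filter_upwards [self_mem_nhdsWithin] with s hs using key s hs)
  simpa using hle

lemma one_sub_ne {u : ℂ} (h : ‖u‖ < 1) : (1 : ℂ) - u ≠ 0 := by
  intro h0
  have : u = 1 := by linear_combination -h0
  rw [this] at h; simp at h

lemma mobius_lt_one {a w : ℂ} (ha : ‖a‖ < 1) (hw : ‖w‖ < 1) :
    ‖(a - w) / (1 - (starRingEnd ℂ) a * w)‖ < 1 := by
  have hd : ‖(starRingEnd ℂ) a * w‖ < 1 := by
    rw [norm_mul, Complex.norm_conj]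
    calc ‖a‖ * ‖w‖ ≤ ‖a‖ * 1 :=
          mul_le_mul_of_nonneg_left hw.le (norm_nonneg a)
      _ < 1 := by simpa using ha
  have hd0 : (1 : ℂ) - (starRingEnd ℂ) a * w ≠ 0 := one_sub_ne hd
  rw [norm_div, div_lt_one (norm_pos_iff.mpr hd0)]
  have hns : Complex.normSq (a - w) < Complex.normSq (1 - (starRingEnd ℂ) a * w) := by
    have e1 : Complex.normSq (a - w)
        = Complex.normSq a + Complex.normSq w - 2 * (a * (starRingEnd ℂ) w).re :=
      Complex.normSq_sub a w
    have e2 : Complex.normSq (1 - (starRingEnd ℂ) a * w)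
        = 1 + Complex.normSq a * Complex.normSq w - 2 * (a * (starRingEnd ℂ) w).re := by
      rw [Complex.normSq_sub]
      rw [show (starRingEnd ℂ) ((starRingEnd ℂ) a * w) = a * (starRingEnd ℂ) w by
        rw [map_mul, Complex.conj_conj]]
      simp [Complex.normSq_mul, Complex.normSq_conj]
    have hA : Complex.normSq a < 1 := by
      rw [← Complex.sq_norm]; nlinarith [norm_nonneg a]
    have hW : Complex.normSq w < 1 := by
      rw [← Complex.sq_norm]; nlinarith [norm_nonneg w]
    rw [e1, e2]; nlinarith
  have := Real.sqrt_lt_sqrt (Complex.normSq_nonneg _) hns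
  rwa [← Complex.norm_def, ← Complex.norm_def] at this

lemma mobius_abs_le {a w : ℂ} (ha : ‖a‖ < 1) (hw : ‖w‖ < 1) :
    ‖(a - w) / (1 - (starRingEnd ℂ) a * w)‖
      ≤ (‖a‖ + ‖w‖) / (1 + ‖a‖ * ‖w‖) := by
  set α := ‖a‖ with hα
  set s := ‖w‖ with hs
  have hα0 : 0 ≤ α := norm_nonneg a
  have hs0 : 0 ≤ s := norm_nonneg w
  have hd : ‖(starRingEnd ℂ) a * w‖ < 1 := by
    rw [norm_mul, Complex.norm_conj, ← hα, ← hs]; nlinarith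
  have hd0 : (1 : ℂ) - (starRingEnd ℂ) a * w ≠ 0 := one_sub_ne hd
  rw [norm_div, div_le_div_iff₀ (norm_pos_iff.mpr hd0) (by nlinarith)]
  -- square both sides
  have hc : -(α * s) ≤ (a * (starRingEnd ℂ) w).re := by
    have h1 : |(a * (starRingEnd ℂ) w).re| ≤ ‖a * (starRingEnd ℂ) w‖ :=
      Complex.abs_re_le_norm _
    rw [norm_mul, Complex.norm_conj, ← hα, ← hs] at h1
    cases' abs_le.mp h1 with h2 _
    linarith
  have e1 : ‖a - w‖ ^ 2 = α ^ 2 + s ^ 2 - 2 * (a * (starRingEnd ℂ) w).re := by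
    simp only [hα, hs, Complex.sq_norm]
    exact Complex.normSq_sub a w
  have e2 : ‖1 - (starRingEnd ℂ) a * w‖ ^ 2
      = 1 + α ^ 2 * s ^ 2 - 2 * (a * (starRingEnd ℂ) w).re := by
    simp only [hα, hs, Complex.sq_norm]
    have h0 := Complex.normSq_sub 1 ((starRingEnd ℂ) a * w)
    rw [show (starRingEnd ℂ) ((starRingEnd ℂ) a * w) = a * (starRingEnd ℂ) w by
      rw [map_mul, Complex.conj_conj]] at h0
    rw [h0, Complex.normSq_one, Complex.normSq_mul, Complex.normSq_conj, one_mul]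
  have hsq : ‖a - w‖ ^ 2 * (1 + α * s) ^ 2
      ≤ (α + s) ^ 2 * ‖1 - (starRingEnd ℂ) a * w‖ ^ 2 := by
    rw [e1, e2]
    have h5 : 0 ≤ α * s + (a * (starRingEnd ℂ) w).re := by linarith
    have h6 : 0 ≤ (1 - α ^ 2) * (1 - s ^ 2) := mul_nonneg (by nlinarith) (by nlinarith)
    nlinarith [mul_nonneg h5 h6]
  have h3 : 0 ≤ ‖a - w‖ * (1 + α * s) := by positivity
  have h4 : 0 ≤ (α + s) * ‖1 - (starRingEnd ℂ) a * w‖ := by positivity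
  nlinarith [hsq, h3, h4]

lemma mobius_involution {a w : ℂ} (ha : ‖a‖ < 1) (hw : ‖w‖ < 1) :
    (a - (a - w) / (1 - (starRingEnd ℂ) a * w)) /
      (1 - (starRingEnd ℂ) a * ((a - w) / (1 - (starRingEnd ℂ) a * w))) = w := by
  have hd : ‖(starRingEnd ℂ) a * w‖ < 1 := by
    rw [norm_mul, Complex.norm_conj]
    nlinarith [norm_nonneg a, norm_nonneg w]
  have hd0 : (1 : ℂ) - (starRingEnd ℂ) a * w ≠ 0 := one_sub_ne hd
  have haa : ‖(starRingEnd ℂ) a * a‖ < 1 := by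
    rw [norm_mul, Complex.norm_conj]
    nlinarith [norm_nonneg a]
  have haa0 : (1 : ℂ) - (starRingEnd ℂ) a * a ≠ 0 := one_sub_ne haa
  have he : 1 - (starRingEnd ℂ) a * ((a - w) / (1 - (starRingEnd ℂ) a * w))
      = (1 - (starRingEnd ℂ) a * a) / (1 - (starRingEnd ℂ) a * w) := by
    field_simp
    ring
  rw [he, div_div_eq_mul_div, div_eq_iff haa0]
  rw [sub_div' hd0, div_mul_cancel₀ _ hd0]
  ring

lemma emetric_ball_one_eq : Metric.eball (0:ℂ) 1 = Metric.ball (0:ℂ) 1 := by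
  rw [show (1 : ℝ≥0∞) = ((1 : NNReal) : ℝ≥0∞) by norm_num, Metric.emetric_ball_nnreal]
  norm_num

lemma coreE (c : ℕ → ℂ) (g : ℂ → ℂ) (k : ℕ) (hk : 1 ≤ k)
    (hg : ∀ z ∈ Metric.ball (0 : ℂ) 1, HasSum (fun n : ℕ => c n * z ^ n) (g z))
    (hgb : ∀ z ∈ Metric.ball (0 : ℂ) 1, ‖g z‖ < 1)
    (hc : ∀ i, 0 < i → i < k → c i = 0) :
    (∀ z ∈ Metric.ball (0 : ℂ) 1, ‖c 0 - g z‖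
        ≤ ‖z‖ ^ k * ‖1 - (starRingEnd ℂ) (c 0) * g z‖) ∧
    ‖c k‖ ≤ 1 - ‖c 0‖ ^ 2 := by
  have h0mem : (0:ℂ) ∈ Metric.ball (0:ℂ) 1 := by simp
  have hg0 : g 0 = c 0 := by
    have h2 : HasSum (fun n : ℕ => c n * (0:ℂ) ^ n) (c 0 * (0:ℂ) ^ 0) :=
      hasSum_single (f := fun n : ℕ => c n * (0:ℂ) ^ n) 0 (fun n hn => by simp [zero_pow hn])
    have h2' : HasSum (fun n : ℕ => c n * (0:ℂ) ^ n) (c 0) := by simpa using h2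
    exact (hg 0 h0mem).unique h2'
  have hc0 : ‖c 0‖ < 1 := hg0 ▸ hgb 0 h0mem
  set v : ℂ → ℂ := fun z => ∑' n : ℕ, c (n + k) * z ^ n with hv_def
  have hA : ∀ z ∈ Metric.ball (0:ℂ) 1,
      HasSum (fun n : ℕ => c (n + k) * z ^ (n + k)) (g z - c 0) := by
    intro z hzb
    have hsum0 : ∑ i ∈ Finset.range k, c i * z ^ i = c 0 := by
      rw [Finset.sum_eq_single 0]
      · simp
      · intro i hi hne
        rw [hc i (Nat.pos_of_ne_zero hne) (Finset.mem_range.mp hi)]; ring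
      · intro h
        exact absurd (Finset.mem_range.mpr (lt_of_lt_of_le one_pos hk)) h
    have h5 : HasSum (fun n : ℕ => c n * z ^ n)
        (g z - c 0 + ∑ i ∈ Finset.range k, c i * z ^ i) := by
      rw [hsum0, sub_add_cancel]
      exact hg z hzb
    exact (hasSum_nat_add_iff (f := fun n : ℕ => c n * z ^ n) k).mpr h5
  have hvsum : ∀ z ∈ Metric.ball (0:ℂ) 1,
      HasSum (fun n : ℕ => c (n + k) * z ^ n) (v z) := by
    intro z hzb
    rcases eq_or_ne z 0 with rfl | hz0
    · apply Summable.hasSum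
      apply summable_of_ne_finset_zero (s := {0})
      intro n hn
      simp only [Finset.mem_singleton] at hn
      simp [zero_pow hn]
    · have hB := (hA z hzb).mul_left ((z ^ k)⁻¹)
      rw [show (fun n : ℕ => (z ^ k)⁻¹ * (c (n + k) * z ^ (n + k)))
          = fun n : ℕ => c (n + k) * z ^ n by
        funext n; rw [pow_add]; field_simp] at hB
      exact hB.summable.hasSum
  have hval : ∀ z ∈ Metric.ball (0:ℂ) 1, g z - c 0 = z ^ k * v z := by
    intro z hzb
    have hB := (hvsum z hzb).mul_left (z ^ k)
    rw [show (fun n : ℕ => z ^ k * (c (n + k) * z ^ n))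
        = fun n : ℕ => c (n + k) * z ^ (n + k) by
      funext n; rw [pow_add]; ring] at hB
    exact (hA z hzb).unique hB
  have hv0 : v 0 = c k := by
    have h2 : HasSum (fun n : ℕ => c (n + k) * (0:ℂ) ^ n) (c (0 + k) * (0:ℂ) ^ 0) :=
      hasSum_single (f := fun n : ℕ => c (n + k) * (0:ℂ) ^ n) 0 (fun n hn => by
        simp [zero_pow hn])
    have h2' : HasSum (fun n : ℕ => c (n + k) * (0:ℂ) ^ n) (c k) := by simpa using h2
    exact (hvsum 0 h0mem).unique h2'
  have hgd : DifferentiableOn ℂ g (Metric.ball 0 1) := by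
    have := (hasFPS_of_hasSum c g hg).differentiableOn
    rwa [emetric_ball_one_eq] at this
  have hvd : DifferentiableOn ℂ v (Metric.ball 0 1) := by
    have := (hasFPS_of_hasSum (fun n => c (n + k)) v hvsum).differentiableOn
    rwa [emetric_ball_one_eq] at this
  have hden : ∀ z ∈ Metric.ball (0:ℂ) 1, (1:ℂ) - (starRingEnd ℂ) (c 0) * g z ≠ 0 := by
    intro z hzb
    apply one_sub_ne
    rw [norm_mul, Complex.norm_conj]
    nlinarith [hgb z hzb, norm_nonneg (c 0), norm_nonneg (g z)]
  set q : ℂ → ℂ := fun z => -v z / (1 - (starRingEnd ℂ) (c 0) * g z) with hq_def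
  have hqd : DifferentiableOn ℂ q (Metric.ball 0 1) := by
    apply DifferentiableOn.div hvd.neg
    · exact (differentiableOn_const _).sub ((differentiableOn_const _).mul hgd)
    · exact hden
  have hqz : ∀ z ∈ Metric.ball (0:ℂ) 1,
      c 0 - g z = z ^ k * q z * (1 - (starRingEnd ℂ) (c 0) * g z) := by
    intro z hzb
    have : z ^ k * q z * (1 - (starRingEnd ℂ) (c 0) * g z) = -(z ^ k * v z) := by
      rw [hq_def]
      field_simp [hden z hzb]
    rw [this, ← hval z hzb]
    ring
  have hqb : ∀ z ∈ Metric.ball (0:ℂ) 1, ‖q z‖ ≤ 1 := by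
    apply maxmod_aux q k hqd
    intro z hzb
    have h2 : ‖c 0 - g z‖ = ‖z‖ ^ k * ‖q z‖
        * ‖1 - (starRingEnd ℂ) (c 0) * g z‖ := by
      rw [hqz z hzb, norm_mul, norm_mul, norm_pow]
    have h1 : ‖z‖ ^ k * ‖q z‖
        = ‖c 0 - g z‖ / ‖1 - (starRingEnd ℂ) (c 0) * g z‖ := by
      rw [h2]
      field_simp [norm_ne_zero_iff.mpr (hden z hzb)]
    rw [h1, ← norm_div]
    exact (mobius_lt_one hc0 (hgb z hzb)).le
  constructor
  · intro z hzb
    rw [hqz z hzb, norm_mul, norm_mul, norm_pow]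
    have := hqb z hzb
    have h3 : (0:ℝ) ≤ ‖z‖ ^ k := by positivity
    have h4 : (0:ℝ) ≤ ‖1 - (starRingEnd ℂ) (c 0) * g z‖ := norm_nonneg _
    nlinarith [mul_le_mul_of_nonneg_right (mul_le_mul_of_nonneg_left this h3) h4]
  · have hq0 := hqb 0 h0mem
    have : q 0 = -(c k) / (1 - (starRingEnd ℂ) (c 0) * c 0) := by
      rw [hq_def]
      simp only
      rw [hv0, hg0]
    rw [this] at hq0
    have hcc : (1:ℂ) - (starRingEnd ℂ) (c 0) * c 0 = ((1 - Complex.normSq (c 0) : ℝ) : ℂ) := by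
      rw [mul_comm, Complex.mul_conj]
      push_cast
      ring
    rw [hcc, norm_div, norm_neg, Complex.norm_real, Real.norm_eq_abs] at hq0
    have hns : Complex.normSq (c 0) < 1 := by
      rw [← Complex.sq_norm]; nlinarith [norm_nonneg (c 0)]
    rw [abs_of_pos (by linarith), div_le_one (by linarith)] at hq0
    rw [Complex.sq_norm]
    linarith

lemma f_zero_eq (a : ℕ → ℂ) (f : ℂ → ℂ)
    (hf : ∀ z ∈ Metric.ball (0 : ℂ) 1, HasSum (fun n : ℕ => a n * z ^ n) (f z)) :
    f 0 = a 0 := by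
  have h2 : HasSum (fun n : ℕ => a n * (0:ℂ) ^ n) (a 0 * (0:ℂ) ^ 0) :=
    hasSum_single (f := fun n : ℕ => a n * (0:ℂ) ^ n) 0 (fun n hn => by simp [zero_pow hn])
  have h2' : HasSum (fun n : ℕ => a n * (0:ℂ) ^ n) (a 0) := by simpa using h2
  exact (hf 0 (by simp)).unique h2'

lemma coeff_bound (f : ℂ → ℂ) (a : ℕ → ℂ)
    (hf : ∀ z ∈ Metric.ball (0 : ℂ) 1, HasSum (fun n : ℕ => a n * z ^ n) (f z))
    (hb : ∀ z ∈ Metric.ball (0 : ℂ) 1, ‖f z‖ < 1)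
    (k : ℕ) (hk : 1 ≤ k) :
    ‖a k‖ ≤ 1 - ‖a 0‖ ^ 2 := by
  have hk0 : (k : ℂ) ≠ 0 := Nat.cast_ne_zero.mpr (by omega)
  have hk0' : (k : ℝ) ≠ 0 := Nat.cast_ne_zero.mpr (by omega)
  set ω : ℂ := Complex.exp (((2 * Real.pi / k : ℝ) : ℂ) * Complex.I) with hω_def
  have habsω : ‖ω‖ = 1 := by
    rw [hω_def, Complex.norm_exp]
    simp
  have hωk : ω ^ k = 1 := by
    rw [hω_def, ← Complex.exp_nat_mul]
    rw [show (k : ℂ) * (((2 * Real.pi / k : ℝ) : ℂ) * Complex.I) = 2 * Real.pi * Complex.I by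
      push_cast
      field_simp]
    exact Complex.exp_two_pi_mul_I
  have hω1 : ∀ n : ℕ, k ∣ n → ω ^ n = 1 := by
    rintro n ⟨m, rfl⟩
    rw [pow_mul, hωk, one_pow]
  have hω2 : ∀ n : ℕ, ¬ k ∣ n → ω ^ n ≠ 1 := by
    intro n hdvd heq
    apply hdvd
    rw [hω_def, ← Complex.exp_nat_mul, Complex.exp_eq_one_iff] at heq
    obtain ⟨m, hm⟩ := heq
    field_simp at hm
    have hm' : ((n * (2 * Real.pi) : ℝ) : ℂ) * Complex.I
        = ((m * (2 * Real.pi) * k : ℝ) : ℂ) * Complex.I := by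
      push_cast
      push_cast at hm
      field_simp at hm
      linear_combination (2 * Real.pi * Complex.I) * hm
    have hreal : (n * (2 * Real.pi) : ℝ) = (m * (2 * Real.pi) * k : ℝ) :=
      Complex.ofReal_inj.mp (mul_right_cancel₀ Complex.I_ne_zero hm')
    have h9 : (n : ℝ) * (2 * Real.pi) = ((m : ℝ) * (k : ℝ)) * (2 * Real.pi) := by
      linear_combination hreal
    have hnk : (n : ℝ) = (m : ℝ) * (k : ℝ) :=
      mul_right_cancel₀ (by positivity) h9
    have hznk : (n : ℤ) = m * k := by exact_mod_cast hnk
    exact Int.natCast_dvd_natCast.mp ⟨m, by linarith [hznk]⟩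
  have hgeom : ∀ n : ℕ, ∑ j ∈ Finset.range k, (ω ^ n) ^ j
      = if k ∣ n then (k : ℂ) else 0 := by
    intro n
    by_cases h : k ∣ n
    · rw [if_pos h]
      simp [hω1 n h]
    · rw [if_neg h, geom_sum_eq (hω2 n h)]
      rw [pow_right_comm, hωk, one_pow, sub_self, zero_div]
  set c : ℕ → ℂ := fun n => if k ∣ n then a n else 0 with hc_def
  set g : ℂ → ℂ := fun z => (∑ j ∈ Finset.range k, f (ω ^ j * z)) / k with hg_def
  have hmemj : ∀ (j : ℕ) (z : ℂ), z ∈ Metric.ball (0:ℂ) 1 → ω ^ j * z ∈ Metric.ball (0:ℂ) 1 := by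
    intro j z hzb
    simp only [Metric.mem_ball, dist_zero_right] at hzb ⊢
    rw [norm_mul, norm_pow, habsω, one_pow, one_mul]
    exact hzb
  have hgsum : ∀ z ∈ Metric.ball (0 : ℂ) 1, HasSum (fun n : ℕ => c n * z ^ n) (g z) := by
    intro z hzb
    have hj : ∀ j ∈ Finset.range k,
        HasSum (fun n : ℕ => a n * (ω ^ j * z) ^ n) (f (ω ^ j * z)) :=
      fun j _ => hf _ (hmemj j z hzb)
    have hsum := (hasSum_sum hj).div_const (k : ℂ)
    rw [show (fun n : ℕ => (∑ j ∈ Finset.range k, a n * (ω ^ j * z) ^ n) / (k:ℂ))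
        = fun n : ℕ => c n * z ^ n by
      funext n
      have e1 : ∑ j ∈ Finset.range k, a n * (ω ^ j * z) ^ n
          = a n * z ^ n * ∑ j ∈ Finset.range k, (ω ^ n) ^ j := by
        rw [Finset.mul_sum]
        apply Finset.sum_congr rfl
        intro j _
        rw [mul_pow, pow_right_comm]
        ring
      rw [e1, hgeom n]
      by_cases h : k ∣ n
      · simp only [hc_def, if_pos h]
        field_simp
      · simp only [hc_def, if_neg h]
        simp] at hsum
    exact hsum
  have hgb : ∀ z ∈ Metric.ball (0 : ℂ) 1, ‖g z‖ < 1 := by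
    intro z hzb
    rw [hg_def]
    simp only
    rw [norm_div, Complex.norm_natCast, div_lt_one (by positivity)]
    calc ‖∑ j ∈ Finset.range k, f (ω ^ j * z)‖
        ≤ ∑ j ∈ Finset.range k, ‖f (ω ^ j * z)‖ :=
          norm_sum_le _ _
      _ < ∑ j ∈ Finset.range k, 1 :=
          Finset.sum_lt_sum_of_nonempty (Finset.nonempty_range_iff.mpr (by omega))
            (fun j _ => hb _ (hmemj j z hzb))
      _ = k := by simp
  have hcvan : ∀ i, 0 < i → i < k → c i = 0 := by
    intro i h1 h2
    rw [hc_def]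
    simp only
    rw [if_neg]
    intro hd
    exact absurd (Nat.le_of_dvd h1 hd) (not_le.mpr h2)
  have hcore := (coreE c g k hk hgsum hgb hcvan).2
  have hck : c k = a k := by rw [hc_def]; simp
  have hc0 : c 0 = a 0 := by rw [hc_def]; simp
  rwa [hck, hc0] at hcore

lemma schwarz_pick (f : ℂ → ℂ) (a : ℕ → ℂ)
    (hf : ∀ z ∈ Metric.ball (0 : ℂ) 1, HasSum (fun n : ℕ => a n * z ^ n) (f z))
    (hb : ∀ z ∈ Metric.ball (0 : ℂ) 1, ‖f z‖ < 1) :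
    ∀ z ∈ Metric.ball (0 : ℂ) 1, ‖f z‖
      ≤ (‖a 0‖ + ‖z‖) / (1 + ‖a 0‖ * ‖z‖) := by
  have ha0 : ‖a 0‖ < 1 := f_zero_eq a f hf ▸ hb 0 (by simp)
  obtain ⟨h1, _⟩ := coreE a f 1 le_rfl hf hb (by intro i hi1 hi2; omega)
  intro z hzb
  have hz1 : ‖z‖ < 1 := by
    simpa [Complex.dist_eq] using hzb
  have hfz : ‖f z‖ < 1 := hb z hzb
  have hd0 : (1:ℂ) - (starRingEnd ℂ) (a 0) * f z ≠ 0 := by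
    apply one_sub_ne
    rw [norm_mul, Complex.norm_conj]
    nlinarith [norm_nonneg (a 0), norm_nonneg (f z)]
  set u : ℂ := (a 0 - f z) / (1 - (starRingEnd ℂ) (a 0) * f z) with hu_def
  have hu_le : ‖u‖ ≤ ‖z‖ := by
    rw [hu_def, norm_div, div_le_iff₀ (norm_pos_iff.mpr hd0)]
    simpa [pow_one] using h1 z hzb
  have hu1 : ‖u‖ < 1 := lt_of_le_of_lt hu_le hz1
  have hw : f z = (a 0 - u) / (1 - (starRingEnd ℂ) (a 0) * u) := by
    rw [hu_def]
    exact (mobius_involution ha0 hfz).symm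
  have hb2 : ‖f z‖
      ≤ (‖a 0‖ + ‖u‖) / (1 + ‖a 0‖ * ‖u‖) := by
    rw [hw]
    exact mobius_abs_le ha0 hu1
  refine hb2.trans ?_
  set α := ‖a 0‖
  set s := ‖u‖
  set r := ‖z‖
  have hα0 : 0 ≤ α := norm_nonneg _
  have hs0 : 0 ≤ s := norm_nonneg _
  have hr0 : 0 ≤ r := norm_nonneg _
  rw [div_le_div_iff₀ (by nlinarith) (by nlinarith)]
  nlinarith [mul_nonneg (sub_nonneg.mpr hu_le) (by nlinarith : (0:ℝ) ≤ 1 - α ^ 2)]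

set_option maxHeartbeats 1000000 in
/-- Convex-combination Bohr-type inequality: if f is analytic on the unit disk with
|f| < 1 and Taylor coefficients aₖ, then for 0 < t < 1 and 0 < p ≤ 1,
t|f(z)|^p + (1-t) ∑_{k≥0} |aₖ| r^k ≤ 1 for r = |z| ≤ R_{t,p}. -/
theorem bohr_convex_combination
    (f : ℂ → ℂ) (a : ℕ → ℂ)
    (hf : ∀ z ∈ Metric.ball (0 : ℂ) 1, HasSum (fun k : ℕ => a k * z ^ k) (f z))
    (hb : ∀ z ∈ Metric.ball (0 : ℂ) 1, ‖f z‖ < 1)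
    (t p : ℝ) (ht0 : 0 < t) (ht1 : t < 1) (hp0 : 0 < p) (hp1 : p ≤ 1)
    (R : ℝ)
    (hR : R = if t = 3 / (p + 3) then 1 / 2
              else (1 - t + t * p - 2 * Real.sqrt ((1 - t) * (t * p + 1 - t))) /
                   (t * p - 3 + 3 * t))
    (z : ℂ) (hz : z ∈ Metric.ball (0 : ℂ) 1)
    (r : ℝ) (hr : r = ‖z‖) (hrR : r ≤ R) :
    t * ‖f z‖ ^ p + (1 - t) * ∑' k : ℕ, ‖a k‖ * r ^ k ≤ 1 := by
  have hz1 : ‖z‖ < 1 := by simpa [Complex.dist_eq] using hz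
  have hr0 : 0 ≤ r := hr ▸ norm_nonneg z
  have hr1 : r < 1 := hr ▸ hz1
  have ha0 : ‖a 0‖ < 1 := f_zero_eq a f hf ▸ hb 0 (by simp)
  set α := ‖a 0‖ with hα
  have hα0 : 0 ≤ α := norm_nonneg _
  -- summability of the majorant series
  have hrmem : ((r:ℝ):ℂ) ∈ Metric.ball (0:ℂ) 1 := by
    simp only [Metric.mem_ball, dist_zero_right, Complex.norm_real, Real.norm_eq_abs]
    rwa [abs_of_nonneg hr0]
  have hsummable : Summable (fun k : ℕ => ‖a k‖ * r ^ k) := by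
    have h2 := summable_norm_iff.mpr (hf _ hrmem).summable
    apply h2.congr
    intro n
    rw [norm_mul, norm_pow, Complex.norm_real, Real.norm_eq_abs, abs_of_nonneg hr0]
  -- bound on the tsum
  have hQden : 0 < 1 - r := by linarith
  have hsum_le : ∑' k : ℕ, ‖a k‖ * r ^ k
      ≤ α + (1 - α^2) * (r * (1-r)⁻¹) := by
    rw [hsummable.tsum_eq_zero_add]
    simp only [pow_zero, mul_one]
    have hshift : Summable (fun n : ℕ => ‖a (n+1)‖ * r ^ (n+1)) :=
      (summable_nat_add_iff (f := fun k : ℕ => ‖a k‖ * r ^ k) 1).mpr hsummable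
    have hgeo : Summable (fun n : ℕ => (1 - α^2) * r ^ (n+1)) := by
      apply Summable.congr (((summable_geometric_of_lt_one hr0 hr1)).mul_left ((1 - α^2) * r))
      intro n
      rw [pow_succ]
      ring
    have h1 : ∑' n : ℕ, ‖a (n+1)‖ * r^(n+1) ≤ ∑' n : ℕ, (1 - α^2) * r^(n+1) := by
      apply Summable.tsum_le_tsum _ hshift hgeo
      intro n
      exact mul_le_mul_of_nonneg_right (coeff_bound f a hf hb (n+1) (by omega)) (by positivity)
    have h2 : ∑' n : ℕ, (1 - α^2) * r^(n+1) = (1-α^2) * (r * (1-r)⁻¹) := by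
      rw [tsum_mul_left]
      congr 1
      rw [show (fun n : ℕ => r^(n+1)) = fun n : ℕ => r * r^n from funext fun n => by
        rw [pow_succ]; ring]
      rw [tsum_mul_left, tsum_geometric_of_lt_one hr0 hr1]
    linarith
  -- Schwarz-Pick bound
  have hM' := schwarz_pick f a hf hb z hz
  rw [← hr, ← hα] at hM'
  set M := (α + r)/(1 + α*r) with hM_def
  have hden1 : (0:ℝ) < 1 + α*r := by nlinarith
  have hM0 : 0 ≤ M := by positivity
  have hM1 : M ≤ 1 := by
    rw [hM_def, div_le_one hden1]
    nlinarith
  have hfzp : ‖f z‖ ^ p ≤ M ^ p :=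
    Real.rpow_le_rpow (norm_nonneg _) hM' hp0.le
  have hbern : M ^ p ≤ 1 - p + p * M := by
    have hg := Real.geom_mean_le_arith_mean2_weighted hp0.le
      (by linarith : (0:ℝ) ≤ 1 - p) hM0 zero_le_one (by ring)
    rw [Real.one_rpow, mul_one] at hg
    linarith
  -- the quadratic inequality from r ≤ R
  have hQ : 0 ≤ t*p*(1-r)^2 + (1-t)*(1-3*r)*(1+r) := by
    by_cases hcase : t = 3/(p+3)
    · rw [if_pos hcase] at hR
      have hp3 : (0:ℝ) < p + 3 := by linarith
      have hC : t*p - 3 + 3*t = 0 := by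
        rw [hcase]
        field_simp
        ring
      have e : t*p*(1-r)^2 + (1-t)*(1-3*r)*(1+r)
          = (t*p+1-t)*(1-2*r) + (t*p-3+3*t)*r^2 := by ring
      rw [e, hC]
      have h5 : 0 ≤ t*p+1-t := by nlinarith
      have h6 : 0 ≤ 1 - 2*r := by rw [hR] at hrR; linarith
      nlinarith
    · rw [if_neg hcase] at hR
      have hp3 : (0:ℝ) < p + 3 := by linarith
      have hC : t*p - 3 + 3*t ≠ 0 := by
        intro h
        apply hcase
        rw [eq_div_iff (by linarith)]
        linarith
      set D := Real.sqrt ((1-t)*(t*p+1-t)) with hD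
      have hD0 : (0:ℝ) ≤ D := Real.sqrt_nonneg _
      have hAB : (0:ℝ) < t*p+1-t := by nlinarith
      have hD2 : D^2 = (1-t)*(t*p+1-t) := Real.sq_sqrt (by nlinarith)
      have hCR : (t*p - 3 + 3*t) * R = (1 - t + t*p) - 2*D := by
        rw [hR]
        exact mul_div_cancel₀ _ hC
      have hQR : (t*p-3+3*t)*R^2 - 2*(t*p+1-t)*R + (t*p+1-t) = 0 := by
        have h2 : ((t*p-3+3*t)*R)^2 = ((1-t+t*p) - 2*D)^2 := by rw [hCR]
        have h3 : (t*p-3+3*t) * ((t*p-3+3*t)*R^2 - 2*(t*p+1-t)*R + (t*p+1-t)) = 0 := by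
          linear_combination h2 - 2*(t*p+1-t)*hCR + 4*hD2
        rcases mul_eq_zero.mp h3 with h|h
        · exact absurd h hC
        · exact h
      have hC_le : (t*p-3+3*t)*(r + R) ≤ 2*(t*p+1-t) := by
        rcases le_or_gt 0 (t*p-3+3*t) with hge|hlt
        · have h4 : (t*p-3+3*t)*(r+R) ≤ 2*((t*p-3+3*t)*R) := by
            nlinarith [mul_le_mul_of_nonneg_left hrR hge]
          rw [hCR] at h4
          linarith
        · have hR0 : (0:ℝ) ≤ R := le_trans hr0 hrR
          nlinarith
      have hQ2 : 0 ≤ (t*p-3+3*t)*r^2 - 2*(t*p+1-t)*r + (t*p+1-t) := by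
        nlinarith [mul_nonneg (sub_nonneg.mpr hrR) (sub_nonneg.mpr hC_le), hQR]
      nlinarith [hQ2]
  -- final assembly
  have hstep : t * ‖f z‖ ^ p + (1 - t) * ∑' k : ℕ, ‖a k‖ * r ^ k
      ≤ t * (1 - p + p*M) + (1-t)*(α + (1-α^2)*(r*(1-r)⁻¹)) :=
    add_le_add (mul_le_mul_of_nonneg_left (hfzp.trans hbern) ht0.le)
      (mul_le_mul_of_nonneg_left hsum_le (by linarith))
  refine hstep.trans ?_
  have key : t*(1-p+p*M) + (1-t)*(α + (1-α^2)*(r*(1-r)⁻¹))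
      = (t*(1-p)*(1+α*r)*(1-r) + t*p*(α+r)*(1-r)
        + (1-t)*(α*(1+α*r)*(1-r) + (1-α^2)*r*(1+α*r))) / ((1+α*r)*(1-r)) := by
    rw [hM_def]
    field_simp
  rw [key, div_le_one (by positivity)]
  have h1α : (0:ℝ) ≤ 1 - α := by linarith
  have goal_poly : 0 ≤ (1-α) * (t*p*(1-r)^2 - (1-t)*((1+α)*r - 1 + r)*(1+α*r)) := by
    rcases le_or_gt ((1+α)*r - 1 + r) 0 with hneg|hpos
    · apply mul_nonneg h1α
      have t2 : 0 ≤ (1-t)*(-((1+α)*r - 1 + r))*(1+α*r) := by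
        apply mul_nonneg (mul_nonneg (by linarith) (by linarith)) hden1.le
      nlinarith [mul_pos ht0 hp0, sq_nonneg (1-r)]
    · have hle1 : (1+α)*r - 1 + r ≤ 3*r - 1 := by nlinarith
      have hle2 : 1 + α*r ≤ 1 + r := by nlinarith
      have h31 : (0:ℝ) < 3*r - 1 := lt_of_lt_of_le hpos hle1
      have hprodin : ((1+α)*r - 1 + r)*(1+α*r) ≤ (3*r-1)*(1+r) :=
        mul_le_mul hle1 hle2 hden1.le h31.le
      have hprod : (1-t)*(((1+α)*r - 1 + r)*(1+α*r)) ≤ (1-t)*((3*r-1)*(1+r)) :=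
        mul_le_mul_of_nonneg_left hprodin (by linarith)
      apply mul_nonneg h1α
      nlinarith [hQ, hprod]
  nlinarith [goal_poly]
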